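/- Let m, k > 1 and let y be a positive integer with y < k, and set c = gcd(y, k). If y/c is even, then on a deck of m^k cards the group ⟨I_{m^y}, O_{m^y}⟩ generated by the in and out m^y-shuffles is isomorphic to the semidirect product (ℤ/2ℤ)^{(k/c)−1} ⋊_φ ℤ/(k/c)ℤ, where the generator 1 of ℤ/(k/c)ℤ acts on (ℤ/2ℤ)^{(k/c)−1} by φ(1)·(a_1, a_2, …, a_{(k/c)−1}) = (a_{(k/c)−1}, a_1 + a_{(k/c)−1}, a_2 + a_{(k/c)−1}, …, a_{(k/c)−2} + a_{(k/c)−1}). In particular this group has order 2^{(k/c)−1}·(k/c) and is independent of m. -/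

import Mathlib

namespace ShuffleAux

/-- division/mod of a "digit complement" -/
lemma compl_div_mod {P Q a : ℕ} (hP : 0 < P) (ha : a < Q * P) :
    (Q * P - 1 - a) / P = Q - 1 - a / P ∧ (Q * P - 1 - a) % P = P - 1 - a % P := by
  obtain ⟨A, B, hB, rfl⟩ : ∃ A B, B < P ∧ a = A * P + B :=
    ⟨a / P, a % P, Nat.mod_lt _ hP, by rw [mul_comm]; exact (Nat.div_add_mod a P).symm⟩
  have hAQ : A < Q := by
    by_contra h
    push_neg at h
    have := Nat.mul_le_mul_right P h
    omega
  have h1 : (A * P + B) / P = A := by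
    rw [mul_comm, Nat.mul_add_div hP, Nat.div_eq_of_lt hB, add_zero]
  have h2 : (A * P + B) % P = B := by
    rw [mul_comm, Nat.mul_add_mod, Nat.mod_eq_of_lt hB]
  have key : (Q - 1 - A) * P = Q * P - P - A * P := by
    rw [Nat.sub_mul, Nat.sub_mul, one_mul]
  have le1 : A * P + P ≤ Q * P := by
    have : (A + 1) * P ≤ Q * P := Nat.mul_le_mul_right P hAQ
    rw [add_mul, one_mul] at this
    exact this
  have D : Q * P - 1 - (A * P + B) = (Q - 1 - A) * P + (P - 1 - B) := by omega
  refine ⟨?_, ?_⟩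
  · rw [D, h1, mul_comm (Q - 1 - A) P, Nat.mul_add_div hP,
      Nat.div_eq_of_lt (show P - 1 - B < P by omega), add_zero]
  · rw [D, h2, mul_comm (Q - 1 - A) P, Nat.mul_add_mod, Nat.mod_eq_of_lt (by omega)]

/-- digit `j < y` of `m^y * r + q` is digit `j` of `q`. -/
lemma digit_low {m y r q j : ℕ} (hm : 0 < m) (hj : j < y) :
    (m ^ y * r + q) / m ^ j % m = q / m ^ j % m := by
  have hy : y = (y - j - 1) + 1 + j := by omega
  have h1 : m ^ y * r + q = q + m * (m ^ (y - j - 1) * r) * m ^ j := by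
    conv_lhs => rw [hy]
    rw [pow_add, pow_add, pow_one]
    ring
  rw [h1, Nat.add_mul_div_right _ _ (Nat.pow_pos (n := j) hm), Nat.add_mul_mod_self_left]

/-- digit `j ≥ y` of `m^y * r + q` (with `q < m^y`) is digit `j - y` of `r`. -/
lemma digit_high {m y r q j : ℕ} (hm : 0 < m) (hq : q < m ^ y) (hj : y ≤ j) :
    (m ^ y * r + q) / m ^ j = r / m ^ (j - y) := by
  have h : m ^ j = m ^ y * m ^ (j - y) := by rw [← pow_add]; congr 1; omega
  rw [h, ← Nat.div_div_eq_div_mul, add_comm, Nat.add_mul_div_left _ _ (Nat.pow_pos (n := y) hm),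
    Nat.div_eq_of_lt hq, zero_add]

/-- digits of `i % m^s` below `s` agree with digits of `i`. -/
lemma digit_mod {m s t i : ℕ} (ht : t < s) :
    (i % m ^ s) / m ^ t % m = i / m ^ t % m := by
  have h1 : m ^ s = m ^ t * m ^ (s - t) := by rw [← pow_add]; congr 1; omega
  rw [h1, Nat.mod_mul_right_div_self, Nat.mod_mod_of_dvd]
  exact dvd_pow_self m (by omega)


/-- The "affine" permutation of digit strings: rotate indices by `s`, then
complement digits at positions where `e` is `1`. -/
def P (m k : ℕ) (e : ZMod k → ZMod 2) (s : ZMod k) : Equiv.Perm (ZMod k → Fin m) where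
  toFun x j := if e j = 0 then x (j - s) else (x (j - s)).rev
  invFun x j := if e (j + s) = 0 then x (j + s) else (x (j + s)).rev
  left_inv x := by
    funext j
    by_cases h : e (j + s) = 0 <;> simp [h, add_sub_cancel_right, Fin.rev_rev]
  right_inv x := by
    funext j
    by_cases h : e j = 0 <;> simp [h, sub_add_cancel, Fin.rev_rev]

lemma P_apply {m k : ℕ} (e : ZMod k → ZMod 2) (s : ZMod k) (x : ZMod k → Fin m) (j : ZMod k) :
    (P m k e s) x j = if e j = 0 then x (j - s) else (x (j - s)).rev := rfl

lemma zmod2_cases (z : ZMod 2) : z = 0 ∨ z = 1 := by revert z; decide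

lemma P_mul {m k : ℕ} (e f : ZMod k → ZMod 2) (s t : ZMod k) :
    P m k e s * P m k f t = P m k (e + fun j => f (j - s)) (s + t) := by
  apply Equiv.ext
  intro x
  funext j
  rw [Equiv.Perm.mul_apply]
  rcases zmod2_cases (e j) with he | he <;> rcases zmod2_cases (f (j - s)) with hf | hf <;>
    simp [P_apply, he, hf, sub_sub, Fin.rev_rev, Pi.add_apply, show (1:ZMod 2) + 1 = 0 by decide,
      show (0:ZMod 2) + 1 = 1 by decide, show ((1:ZMod 2)) ≠ 0 by decide]

lemma P_one {m k : ℕ} : P m k 0 0 = 1 := by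
  apply Equiv.ext
  intro x
  funext j
  simp [P_apply]

lemma P_inv {m k : ℕ} (e : ZMod k → ZMod 2) (s : ZMod k) :
    (P m k e s)⁻¹ = P m k (fun j => e (j + s)) (-s) := by
  refine inv_eq_of_mul_eq_one_right ?_
  rw [P_mul]
  have h1 : (e + fun j => (fun j' => e (j' + s)) (j - s)) = 0 := by
    funext j
    have h2 : ∀ z : ZMod 2, z + z = 0 := by decide
    simp [sub_add_cancel, h2]
  rw [h1, add_neg_cancel, P_one]

lemma P_eq_one {m k : ℕ} (hm : 1 < m) (hk : 1 < k) {e : ZMod k → ZMod 2} {s : ZMod k}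
    (h : P m k e s = 1) : e = 0 ∧ s = 0 := by
  haveI : NeZero k := ⟨by omega⟩
  have he : e = 0 := by
    funext j
    have := congrFun (congrFun (congrArg (fun (σ : Equiv.Perm (ZMod k → Fin m)) => (σ : (ZMod k → Fin m) → (ZMod k → Fin m))) h) (fun _ => (⟨0, by omega⟩ : Fin m))) j
    simp only [P_apply, Equiv.Perm.coe_one, id_eq] at this
    rcases zmod2_cases (e j) with h0 | h1
    · simp [h0]
    · rw [h1, if_neg (by decide)] at this
      have hv := congrArg Fin.val this
      rw [Fin.val_rev] at hv
      simp at hv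
      omega
  subst he
  refine ⟨rfl, ?_⟩
  by_contra hs
  have := congrFun (congrFun (congrArg (fun (σ : Equiv.Perm (ZMod k → Fin m)) => (σ : (ZMod k → Fin m) → (ZMod k → Fin m))) h) (fun j => if j = 0 then (⟨1, hm⟩ : Fin m) else ⟨0, by omega⟩)) s
  simp only [P_apply, Equiv.Perm.coe_one, id_eq, Pi.zero_apply, if_pos rfl, sub_self] at this
  simp only [if_true] at this
  rw [if_neg hs] at this
  exact absurd (congrArg Fin.val this) (by simp)


def chi (k y : ℕ) : ZMod k → ZMod 2 := fun x => if x.val < y then 1 else 0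

def V (k y : ℕ) (j : ℕ) : ZMod k → ZMod 2 := fun x => chi k y (x - ((j * y : ℕ) : ZMod k))

lemma V_zero (k y : ℕ) : V k y 0 = chi k y := by
  funext x
  simp [V]

lemma V_rot (k y : ℕ) (j : ℕ) (x : ZMod k) :
    V k y j (x - (y : ZMod k)) = V k y (j + 1) x := by
  unfold V
  congr 1
  push_cast
  ring

lemma V_period (k y n : ℕ) (hny : ((n * y : ℕ) : ZMod k) = 0) (j : ℕ) :
    V k y (j + n) = V k y j := by
  funext x
  unfold V
  congr 2
  have h : (j + n) * y = j * y + n * y := by ring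
  rw [h, Nat.cast_add, hny, add_zero]

/-- number of `N < u*k` with `N % k = r` is `u`. -/
lemma count_mod (k u r : ℕ) (hr : r < k) :
    ((Finset.range (u * k)).filter (fun N => N % k = r)).card = u := by
  have hk : 0 < k := by omega
  conv_rhs => rw [← Finset.card_range u]
  apply Finset.card_bij' (fun N _ => N / k) (fun t _ => t * k + r)
  · intro N hN
    simp only [Finset.mem_filter, Finset.mem_range] at hN
    simp only [Finset.mem_range]
    exact Nat.div_lt_of_lt_mul (by rw [mul_comm]; exact hN.1)
  · intro t ht
    simp only [Finset.mem_range] at ht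
    simp only [Finset.mem_filter, Finset.mem_range]
    constructor
    · have h1 : (t + 1) * k ≤ u * k := Nat.mul_le_mul_right k ht
      rw [add_mul, one_mul] at h1
      omega
    · rw [mul_comm, Nat.mul_add_mod, Nat.mod_eq_of_lt hr]
  · intro N hN
    simp only [Finset.mem_filter, Finset.mem_range] at hN
    have h1 := Nat.div_add_mod N k
    have h2 : N / k * k = k * (N / k) := mul_comm _ _
    omega
  · intro t _
    rw [mul_comm, Nat.mul_add_div hk, Nat.div_eq_of_lt hr, add_zero]

/-- the key counting fact : `∑_{j<n} V j x = u` as a parity. -/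
lemma sum_V (k y n u : ℕ) [NeZero k] (hy0 : 0 < y) (hyk : y < k)
    (hny : n * y = u * k) (x : ZMod k) :
    ∑ j ∈ Finset.range n, V k y j x = (u : ZMod 2) := by
  have hk : 0 < k := Nat.pos_of_ne_zero (NeZero.ne k)
  unfold V chi
  rw [Finset.sum_boole]
  rw [← count_mod k u x.val (ZMod.val_lt x)]
  have hval : ∀ N : ℕ, N % k = x.val → (x - ((N / y * y : ℕ) : ZMod k)).val = N % y := by
    intro N hN2
    have hNx : ((N : ℕ) : ZMod k) = x := by
      rw [← ZMod.natCast_mod, hN2, ZMod.natCast_val, ZMod.cast_id]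
    have hle : N / y * y ≤ N := Nat.div_mul_le_self N y
    have hsub : x - ((N / y * y : ℕ) : ZMod k) = ((N - N / y * y : ℕ) : ZMod k) := by
      rw [Nat.cast_sub hle, hNx]
    rw [hsub, ZMod.val_natCast]
    have hmod : N - N / y * y = N % y := by
      have h1 := Nat.div_add_mod N y
      have h2 : N / y * y = y * (N / y) := mul_comm _ _
      omega
    rw [hmod, Nat.mod_eq_of_lt (lt_trans (Nat.mod_lt _ hy0) hyk)]
  congr 1
  apply Finset.card_bij'
    (fun j _ => j * y + (x - ((j * y : ℕ) : ZMod k)).val)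
    (fun N _ => N / y)
  · intro j hj
    simp only [Finset.mem_filter, Finset.mem_range] at hj ⊢
    obtain ⟨hj1, hj2⟩ := hj
    constructor
    · have h1 : (j + 1) * y ≤ n * y := Nat.mul_le_mul_right y hj1
      rw [add_mul, one_mul] at h1
      omega
    · have hcast : ((j * y + (x - ((j * y : ℕ) : ZMod k)).val : ℕ) : ZMod k) = x := by
        push_cast [ZMod.natCast_val, ZMod.cast_id]
        ring
      conv_rhs => rw [← hcast, ZMod.val_natCast]
  · intro N hN
    simp only [Finset.mem_filter, Finset.mem_range] at hN ⊢
    obtain ⟨hN1, hN2⟩ := hN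
    constructor
    · exact Nat.div_lt_of_lt_mul (by rw [mul_comm]; omega)
    · rw [hval N hN2]
      exact Nat.mod_lt _ hy0
  · intro j hj
    simp only [Finset.mem_filter, Finset.mem_range] at hj
    rw [add_comm, Nat.add_mul_div_right _ _ hy0, Nat.div_eq_of_lt hj.2, zero_add]
  · intro N hN
    simp only [Finset.mem_filter, Finset.mem_range] at hN
    rw [hval N hN.2]
    have h1 := Nat.div_add_mod N y
    have h2 : N / y * y = y * (N / y) := mul_comm _ _
    omega

lemma val_sub_one {k : ℕ} [NeZero k] (hk : 1 < k) (z : ZMod k) :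
    (z - 1).val = if z = 0 then k - 1 else z.val - 1 := by
  by_cases hz : z = 0
  · rw [if_pos hz, hz, zero_sub]
    have h1 : ((k - 1 : ℕ) : ZMod k) = -1 := by
      rw [Nat.cast_sub (by omega), ZMod.natCast_self, Nat.cast_one, zero_sub]
    rw [← h1, ZMod.val_natCast, Nat.mod_eq_of_lt (by omega)]
  · rw [if_neg hz]
    have h1 : 1 ≤ z.val := by
      rcases Nat.eq_zero_or_pos z.val with h | h
      · exact absurd ((ZMod.val_eq_zero z).mp h) hz
      · exact h
    have h2 : z - 1 = ((z.val - 1 : ℕ) : ZMod k) := by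
      rw [Nat.cast_sub h1, Nat.cast_one, ZMod.natCast_val, ZMod.cast_id]
    rw [h2, ZMod.val_natCast, Nat.mod_eq_of_lt (by have := ZMod.val_lt z; omega)]

lemma DV (k y : ℕ) [NeZero k] (hk : 1 < k) (hy0 : 0 < y) (hyk : y < k) (j : ℕ) (x : ZMod k) :
    V k y j x + V k y j (x - 1) =
      (if x = ((j * y : ℕ) : ZMod k) then 1 else 0) +
      (if x = (((j + 1) * y : ℕ) : ZMod k) then 1 else 0) := by
  have hyv : ((y : ℕ) : ZMod k).val = y := by
    rw [ZMod.val_natCast, Nat.mod_eq_of_lt hyk]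
  have hyne : ((y : ℕ) : ZMod k) ≠ 0 := by
    intro h
    rw [h, ZMod.val_zero] at hyv
    omega
  set z := x - ((j * y : ℕ) : ZMod k) with hz
  have hx1 : x - 1 - ((j * y : ℕ) : ZMod k) = z - 1 := by rw [hz, sub_right_comm]
  have hc1 : (x = ((j * y : ℕ) : ZMod k)) ↔ z = 0 := by rw [hz, sub_eq_zero]
  have hc2 : (x = (((j + 1) * y : ℕ) : ZMod k)) ↔ z = ((y : ℕ) : ZMod k) := by
    have hcast : (((j + 1) * y : ℕ) : ZMod k) = ((y : ℕ) : ZMod k) + ((j * y : ℕ) : ZMod k) := by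
      push_cast
      ring
    rw [hcast, hz, sub_eq_iff_eq_add]
  unfold V chi
  rw [hx1, ← hz]
  simp only [hc1, hc2]
  by_cases h0 : z = 0
  · rw [if_pos h0, h0, ZMod.val_zero, if_pos hy0, val_sub_one hk, if_pos rfl,
      if_neg (by omega : ¬ k - 1 < y), if_neg (fun h => hyne h.symm)]
  · rw [if_neg h0, val_sub_one hk, if_neg h0]
    have hzz : ((z.val : ℕ) : ZMod k) = z := ZMod.natCast_rightInverse z
    by_cases hzy : z = ((y : ℕ) : ZMod k)
    · rw [if_pos hzy, hzy, hyv, if_neg (lt_irrefl y), if_pos (by omega : y - 1 < y)]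
    · rw [if_neg hzy]
      have hv0 : z.val ≠ 0 := fun h => h0 ((ZMod.val_eq_zero z).mp h)
      have hvy : z.val ≠ y := by
        intro h
        exact hzy (by rw [← hzz, h])
      split_ifs with h1 h2 h2
      · decide
      · omega
      · omega
      · decide

lemma indep (k y n : ℕ) [NeZero k] (hk : 1 < k) (hy0 : 0 < y) (hyk : y < k) (hn : 2 ≤ n)
    (hG : ∀ s t : ℕ, ((s * y : ℕ) : ZMod k) = ((t * y : ℕ) : ZMod k) ↔ s % n = t % n)
    (A : ℕ → ZMod 2)
    (hA : ∀ x : ZMod k, ∑ t ∈ Finset.range (n - 1), A t * V k y (t + 1) x = 0) :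
    ∀ t, t < n - 1 → A t = 0 := by
  have key : ∀ s, 1 ≤ s → s ≤ n - 1 →
      A (s - 1) + (if 2 ≤ s then A (s - 2) else 0) = 0 := by
    intro s hs1 hs2
    set x : ZMod k := ((s * y : ℕ) : ZMod k) with hxdef
    have h3 : ∑ t ∈ Finset.range (n - 1), A t * (V k y (t + 1) x + V k y (t + 1) (x - 1)) = 0 := by
      simp only [mul_add, Finset.sum_add_distrib, hA x, hA (x - 1), add_zero]
    rw [Finset.sum_congr rfl (fun t _ => by rw [DV k y hk hy0 hyk (t + 1) x])] at h3
    have hsum1 : ∑ t ∈ Finset.range (n - 1),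
        A t * (if x = (((t + 1) * y : ℕ) : ZMod k) then (1 : ZMod 2) else 0) = A (s - 1) := by
      rw [Finset.sum_congr rfl (fun t ht => ?_), Finset.sum_ite_eq' (Finset.range (n - 1)) (s - 1) A,
        if_pos (Finset.mem_range.mpr (by omega))]
      have ht' := Finset.mem_range.mp ht
      have hcond : (x = (((t + 1) * y : ℕ) : ZMod k)) ↔ t = s - 1 := by
        rw [hxdef, hG s (t + 1), Nat.mod_eq_of_lt (show s < n by omega),
          Nat.mod_eq_of_lt (show t + 1 < n by omega)]
        omega
      simp only [hcond, mul_ite, mul_one, mul_zero]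
    have hsum2 : ∑ t ∈ Finset.range (n - 1),
        A t * (if x = (((t + 1 + 1) * y : ℕ) : ZMod k) then (1 : ZMod 2) else 0) =
        (if 2 ≤ s then A (s - 2) else 0) := by
      by_cases hs3 : 2 ≤ s
      · rw [Finset.sum_congr rfl (fun t ht => ?_), Finset.sum_ite_eq' (Finset.range (n - 1)) (s - 2) A,
          if_pos (Finset.mem_range.mpr (by omega)), if_pos hs3]
        have ht' := Finset.mem_range.mp ht
        have hcond : (x = (((t + 1 + 1) * y : ℕ) : ZMod k)) ↔ t = s - 2 := by
          rw [hxdef, hG s (t + 1 + 1), Nat.mod_eq_of_lt (show s < n by omega)]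
          by_cases htn : t + 2 < n
          · rw [Nat.mod_eq_of_lt (show t + 1 + 1 < n by omega)]
            omega
          · have htn2 : t + 1 + 1 = n := by omega
            rw [htn2, Nat.mod_self]
            omega
        simp only [hcond, mul_ite, mul_one, mul_zero]
      · rw [if_neg hs3]
        apply Finset.sum_eq_zero
        intro t ht
        have ht' := Finset.mem_range.mp ht
        have hcond : (x = (((t + 1 + 1) * y : ℕ) : ZMod k)) ↔ False := by
          rw [hxdef, hG s (t + 1 + 1), Nat.mod_eq_of_lt (show s < n by omega)]
          by_cases htn : t + 2 < n
          · rw [Nat.mod_eq_of_lt (show t + 1 + 1 < n by omega)]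
            exact iff_false_intro (by omega)
          · have htn2 : t + 1 + 1 = n := by omega
            rw [htn2, Nat.mod_self]
            exact iff_false_intro (by omega)
        simp only [hcond, if_false, mul_zero]
    rw [Finset.sum_congr rfl (fun t _ => mul_add (A t) _ _), Finset.sum_add_distrib,
      hsum1, hsum2] at h3
    exact h3
  intro t
  induction t using Nat.strong_induction_on with
  | _ t ih =>
    intro ht
    have h := key (t + 1) (by omega) (by omega)
    simp only [Nat.add_sub_cancel] at h
    by_cases h2 : 2 ≤ t + 1
    · rw [if_pos h2] at h
      have := ih (t + 1 - 2) (by omega) (by omega)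
      rw [this, add_zero] at h
      exact h
    · rw [if_neg h2, add_zero] at h
      exact h

def Efun (k y n : ℕ) (A : ℕ → ZMod 2) : ZMod k → ZMod 2 :=
  ∑ t ∈ Finset.range (n - 1), A t • V k y (t + 1)

lemma Efun_apply (k y n : ℕ) (A : ℕ → ZMod 2) (x : ZMod k) :
    Efun k y n A x = ∑ t ∈ Finset.range (n - 1), A t * V k y (t + 1) x := by
  unfold Efun
  rw [Finset.sum_apply]
  exact Finset.sum_congr rfl fun t _ => by rw [Pi.smul_apply, smul_eq_mul]

lemma Efun_addfun (k y n : ℕ) (A B : ℕ → ZMod 2) :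
    Efun k y n (fun t => A t + B t) = Efun k y n A + Efun k y n B := by
  funext x
  rw [Pi.add_apply, Efun_apply, Efun_apply, Efun_apply, ← Finset.sum_add_distrib]
  exact Finset.sum_congr rfl fun t _ => add_mul _ _ _

lemma rot_E (k y n : ℕ) (hn : 2 ≤ n) (hny : ((n * y : ℕ) : ZMod k) = 0)
    (hsum : ∀ x : ZMod k, ∑ j ∈ Finset.range n, V k y j x = 0)
    (A : ℕ → ZMod 2) (x : ZMod k) :
    Efun k y n A (x - ((y : ℕ) : ZMod k)) =
      Efun k y n (fun s => if s = 0 then A (n - 2) else A (s - 1) + A (n - 2)) x := by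
  have hper : V k y n = V k y 0 := by
    have h := V_period k y n hny 0
    rwa [zero_add] at h
  have hnn : n - 1 = (n - 2) + 1 := by omega
  have hx := hsum x
  rw [show n = (n - 2) + 1 + 1 from by omega, Finset.sum_range_succ',
    Finset.sum_range_succ'] at hx
  have hx2 : V k y 0 x = (∑ i ∈ Finset.range (n - 2), V k y (i + 1 + 1) x) + V k y (0 + 1) x := by
    have h' : V k y 0 x = -((∑ i ∈ Finset.range (n - 2), V k y (i + 1 + 1) x) + V k y (0 + 1) x) := by
      linear_combination hx
    rwa [show ∀ z : ZMod 2, -z = z from by decide] at h'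
  rw [Efun_apply, Efun_apply]
  calc ∑ t ∈ Finset.range (n - 1), A t * V k y (t + 1) (x - ((y : ℕ) : ZMod k))
      = ∑ t ∈ Finset.range (n - 1), A t * V k y (t + 1 + 1) x :=
        Finset.sum_congr rfl (fun t _ => by rw [V_rot])
    _ = (∑ t ∈ Finset.range (n - 2), A t * V k y (t + 1 + 1) x)
          + A (n - 2) * V k y ((n - 2) + 1 + 1) x := by
        rw [hnn, Finset.sum_range_succ]
    _ = (∑ t ∈ Finset.range (n - 2), A t * V k y (t + 1 + 1) x)
          + A (n - 2) * V k y 0 x := by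
        rw [show (n - 2) + 1 + 1 = n from by omega, hper]
    _ = ∑ t ∈ Finset.range (n - 1),
          (if t = 0 then A (n - 2) else A (t - 1) + A (n - 2)) * V k y (t + 1) x := ?_
  rw [hnn, Finset.sum_range_succ']
  simp only [Nat.succ_ne_zero, if_false, if_true, eq_self_iff_true, Nat.add_sub_cancel]
  rw [Finset.sum_congr rfl (fun i (_ : i ∈ Finset.range (n - 2)) =>
    add_mul (A i) (A (n - 2)) (V k y (i + 1 + 1) x)), Finset.sum_add_distrib, ← Finset.mul_sum]
  rw [hx2]
  ring

lemma Gcond (k y n c u : ℕ) (hc0 : 0 < c) (hy : y = c * u) (hk : k = c * n)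
    (hco : Nat.Coprime u n) (s t : ℕ) :
    ((s * y : ℕ) : ZMod k) = ((t * y : ℕ) : ZMod k) ↔ s % n = t % n := by
  have h0 : ((s * y : ℕ) : ZMod k) = ((t * y : ℕ) : ZMod k) ↔ s * y ≡ t * y [MOD k] :=
    ZMod.natCast_eq_natCast_iff _ _ _
  rw [h0, hy, hk, show s * (c * u) = c * (s * u) from by ring,
    show t * (c * u) = c * (t * u) from by ring,
    Nat.ModEq.mul_left_cancel_iff' (by omega)]
  constructor
  · intro h
    exact Nat.ModEq.cancel_right_of_coprime (by rwa [Nat.coprime_comm] at hco) h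
  · intro h
    exact Nat.ModEq.mul_right u h


section Digits

variable (m k : ℕ)

def zEquiv (k : ℕ) [NeZero k] : ZMod k ≃ Fin k where
  toFun z := ⟨z.val, ZMod.val_lt z⟩
  invFun i := ((i : ℕ) : ZMod k)
  left_inv z := ZMod.natCast_rightInverse z
  right_inv i := by
    ext
    exact (ZMod.val_natCast _ _).trans (Nat.mod_eq_of_lt i.isLt)

def digitEquiv (m k : ℕ) [NeZero k] : Fin (m ^ k) ≃ (ZMod k → Fin m) :=
  finFunctionFinEquiv.symm.trans (Equiv.arrowCongr (zEquiv k).symm (Equiv.refl (Fin m)))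

lemma digitEquiv_val [NeZero k] (i : Fin (m ^ k)) (z : ZMod k) :
    (digitEquiv m k i z : ℕ) = (i : ℕ) / m ^ z.val % m := rfl

/-- conjugation of permutation groups by an equivalence, as a `MulEquiv`. -/
def permConj {α β : Type*} (e : α ≃ β) : Equiv.Perm α ≃* Equiv.Perm β where
  toFun σ := (e.symm.trans σ).trans e
  invFun τ := (e.trans τ).trans e.symm
  left_inv σ := by
    ext x
    simp
  right_inv τ := by
    ext x
    simp
  map_mul' σ τ := by
    ext x
    simp [Equiv.Perm.mul_apply]

lemma permConj_eq {α β : Type*} (e : α ≃ β) (σ : Equiv.Perm α) (τ : Equiv.Perm β)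
    (h : ∀ a, e (σ a) = τ (e a)) : permConj e σ = τ := by
  ext x
  show e (σ (e.symm x)) = τ x
  rw [h (e.symm x), Equiv.apply_symm_apply]

lemma val_sub_natCast {k y : ℕ} [NeZero k] (hyk : y < k) (z : ZMod k) :
    (z - ((y : ℕ) : ZMod k)).val = if z.val < y then z.val + k - y else z.val - y := by
  have hzz : ((z.val : ℕ) : ZMod k) = z := ZMod.natCast_rightInverse z
  by_cases h : z.val < y
  · rw [if_pos h]
    have hcast : ((z.val + k - y : ℕ) : ZMod k) = z - ((y : ℕ) : ZMod k) := by
      rw [Nat.cast_sub (by omega), Nat.cast_add, hzz, ZMod.natCast_self, add_zero]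
    rw [← hcast, ZMod.val_natCast, Nat.mod_eq_of_lt (by omega)]
  · rw [if_neg h]
    have hcast : ((z.val - y : ℕ) : ZMod k) = z - ((y : ℕ) : ZMod k) := by
      rw [Nat.cast_sub (by omega), hzz]
    rw [← hcast, ZMod.val_natCast, Nat.mod_eq_of_lt (by have := ZMod.val_lt z; omega)]

end Digits

lemma O_digits (m k y : ℕ) [NeZero k] (hm : 1 < m) (hyk : y < k)
    (Oy : Equiv.Perm (Fin (m ^ k)))
    (hOy : ∀ i : Fin (m ^ k),
      (Oy i : ℕ) = m ^ y * ((i : ℕ) % m ^ (k - y)) + (i : ℕ) / m ^ (k - y)) :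
    permConj (digitEquiv m k) Oy = P m k 0 ((y : ℕ) : ZMod k) := by
  apply permConj_eq
  intro i
  funext z
  apply Fin.ext
  rw [digitEquiv_val, P_apply, if_pos (show (0 : ZMod k → ZMod 2) z = 0 from rfl),
    digitEquiv_val, hOy i, val_sub_natCast hyk]
  have hm0 : 0 < m := by omega
  have hzk := ZMod.val_lt z
  have hq : (i : ℕ) / m ^ (k - y) < m ^ y := by
    apply Nat.div_lt_of_lt_mul
    rw [← pow_add, show k - y + y = k from by omega]
    exact i.isLt
  by_cases h : z.val < y
  · rw [if_pos h, digit_low hm0 h, Nat.div_div_eq_div_mul, ← pow_add,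
      show k - y + z.val = z.val + k - y from by omega]
  · rw [if_neg h, digit_high hm0 hq (by omega), digit_mod (by omega : z.val - y < k - y)]

lemma I_digits (m k y : ℕ) [NeZero k] (hm : 1 < m) (hy0 : 0 < y) (hyk : y < k)
    (Iy : Equiv.Perm (Fin (m ^ k)))
    (hIy : ∀ i : Fin (m ^ k),
      (Iy i : ℕ) = m ^ y * ((i : ℕ) % m ^ (k - y))
        + (m ^ y - 1 - (i : ℕ) / m ^ (k - y))) :
    permConj (digitEquiv m k) Iy = P m k (chi k y) ((y : ℕ) : ZMod k) := by
  apply permConj_eq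
  intro i
  funext z
  apply Fin.ext
  have hm0 : 0 < m := by omega
  have hzk := ZMod.val_lt z
  have hq : (i : ℕ) / m ^ (k - y) < m ^ y := by
    apply Nat.div_lt_of_lt_mul
    rw [← pow_add, show k - y + y = k from by omega]
    exact i.isLt
  rw [digitEquiv_val, P_apply, hIy i]
  by_cases h : z.val < y
  · rw [if_neg (show ¬ chi k y z = 0 from by simp [chi, if_pos h]), Fin.val_rev,
      digitEquiv_val, val_sub_natCast hyk, if_pos h]
    rw [digit_low hm0 h]
    have h1 : m ^ y = m ^ (y - z.val) * m ^ z.val := by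
      rw [← pow_add]
      congr 1
      omega
    have h2 := (compl_div_mod (P := m ^ z.val) (Q := m ^ (y - z.val))
      (a := (i : ℕ) / m ^ (k - y)) (Nat.pow_pos hm0) (by rw [← h1]; exact hq)).1
    rw [← h1] at h2
    rw [h2]
    have h3 : m ^ (y - z.val) = m ^ (y - z.val - 1) * m := by
      rw [← pow_succ]
      congr 1
      omega
    have hb : (i : ℕ) / m ^ (k - y) / m ^ z.val < m ^ (y - z.val) := by
      apply Nat.div_lt_of_lt_mul
      rw [← pow_add, show z.val + (y - z.val) = y from by omega]
      exact hq
    have h4 := (compl_div_mod (P := m) (Q := m ^ (y - z.val - 1))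
      (a := (i : ℕ) / m ^ (k - y) / m ^ z.val) hm0 (by rw [← h3]; exact hb)).2
    rw [← h3] at h4
    rw [h4, Nat.div_div_eq_div_mul, ← pow_add,
      show k - y + z.val = z.val + k - y from by omega]
    omega
  · rw [if_pos (show chi k y z = 0 from by simp [chi, if_neg h]), digitEquiv_val,
      val_sub_natCast hyk, if_neg h]
    have hq' : m ^ y - 1 - (i : ℕ) / m ^ (k - y) < m ^ y :=
      lt_of_le_of_lt (Nat.sub_le _ _) (Nat.sub_lt (Nat.pow_pos hm0) one_pos)
    rw [digit_high hm0 hq' (by omega), digit_mod (by omega : z.val - y < k - y)]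

lemma P_congr {m k : ℕ} {e e' : ZMod k → ZMod 2} {s s' : ZMod k} (he : e = e') (hs : s = s') :
    P m k e s = P m k e' s' := by
  rw [he, hs]

lemma P_inv0 {m k : ℕ} (s : ZMod k) : (P m k 0 s)⁻¹ = P m k 0 (-s) := by
  rw [P_inv]
  rfl

lemma P_conj {m k : ℕ} (e : ZMod k → ZMod 2) (s : ZMod k) :
    P m k 0 s * P m k e 0 * (P m k 0 s)⁻¹ = P m k (fun j => e (j - s)) 0 := by
  rw [P_inv0, P_mul, P_mul]
  apply P_congr
  · funext j
    simp
  · simp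

lemma P_pow (m k y : ℕ) : ∀ r : ℕ,
    (P m k 0 ((y : ℕ) : ZMod k)) ^ r = P m k 0 (((r * y : ℕ) : ZMod k))
  | 0 => by
    rw [pow_zero, Nat.zero_mul, Nat.cast_zero, P_one]
  | (r + 1) => by
    rw [pow_succ, P_pow m k y r, P_mul]
    apply P_congr
    · funext j
      simp
    · push_cast
      ring

def extf (n : ℕ) (a : Fin (n - 1) → ZMod 2) : ℕ → ZMod 2 :=
  fun s => if h : s < n - 1 then a ⟨s, h⟩ else 0

lemma extf_add (n : ℕ) (a b : Fin (n - 1) → ZMod 2) :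
    extf n (a + b) = fun s => extf n a s + extf n b s := by
  funext s
  unfold extf
  split
  · simp
  · simp

def fnD (m k y n : ℕ) : Multiplicative (Fin (n - 1) → ZMod 2) →* Equiv.Perm (ZMod k → Fin m) :=
  MonoidHom.mk' (fun a => P m k (Efun k y n (extf n (Multiplicative.toAdd a))) 0) (by
    intro a b
    rw [P_mul]
    apply P_congr
    · rw [toAdd_mul, extf_add, Efun_addfun]
      funext j
      simp
    · simp)

def fgD (m k y n : ℕ) [NeZero n]
    (hG : ∀ s t : ℕ, s % n = t % n → ((s * y : ℕ) : ZMod k) = ((t * y : ℕ) : ZMod k)) :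
    Multiplicative (ZMod n) →* Equiv.Perm (ZMod k → Fin m) :=
  MonoidHom.mk' (fun t => P m k 0 (((Multiplicative.toAdd t).val * y : ℕ) : ZMod k)) (by
    intro t1 t2
    rw [P_mul]
    apply P_congr
    · funext j
      simp
    · have h1 : (Multiplicative.toAdd (t1 * t2)).val % n
          = ((Multiplicative.toAdd t1).val + (Multiplicative.toAdd t2).val) % n := by
        rw [toAdd_mul, ZMod.val_add, Nat.mod_mod_of_dvd _ dvd_rfl]
      have h2 := hG _ _ h1
      rw [h2, add_mul, Nat.cast_add])

lemma Efun_congr (k y n : ℕ) {A B : ℕ → ZMod 2} (h : ∀ s, s < n - 1 → A s = B s) :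
    Efun k y n A = Efun k y n B := by
  unfold Efun
  exact Finset.sum_congr rfl fun t ht => by rw [h t (Finset.mem_range.mp ht)]

lemma fnD_apply (m k y n : ℕ) (a : Multiplicative (Fin (n - 1) → ZMod 2)) :
    fnD m k y n a = P m k (Efun k y n (extf n (Multiplicative.toAdd a))) 0 := rfl

lemma fgD_apply (m k y n : ℕ) [NeZero n]
    (hG : ∀ s t : ℕ, s % n = t % n → ((s * y : ℕ) : ZMod k) = ((t * y : ℕ) : ZMod k))
    (t : Multiplicative (ZMod n)) :
    fgD m k y n hG t = P m k 0 (((Multiplicative.toAdd t).val * y : ℕ) : ZMod k) := rfl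

lemma P_mul00 {m k : ℕ} (e f : ZMod k → ZMod 2) (s : ZMod k) :
    P m k e 0 * P m k f s = P m k (e + f) s := by
  rw [P_mul]
  apply P_congr
  · funext j
    simp
  · simp

end ShuffleAux

open ShuffleAux Multiplicative in
theorem shuffle_aux (m k y c n u : ℕ) (hm : 1 < m) (hk : 1 < k)
    (hy0 : 0 < y) (hyk : y < k) (hgcd0 : 0 < c)
    (hk_eq : k = c * n) (hy_eq : y = c * u) (hco : Nat.Coprime u n) (heven : Even u)
    (Oy Iy : Equiv.Perm (Fin (m ^ k)))
    (hOy : ∀ i : Fin (m ^ k),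
      (Oy i : ℕ) = m ^ y * ((i : ℕ) % m ^ (k - y)) + (i : ℕ) / m ^ (k - y))
    (hIy : ∀ i : Fin (m ^ k),
      (Iy i : ℕ) = m ^ y * ((i : ℕ) % m ^ (k - y)) + (m ^ y - 1 - (i : ℕ) / m ^ (k - y)))
    (φ : Multiplicative (ZMod n) →*
      MulAut (Multiplicative (Fin (n - 1) → ZMod 2)))
    (hφ : ∀ (a : Fin (n - 1) → ZMod 2) (t : Fin (n - 1)),
      Multiplicative.toAdd
          ((φ (Multiplicative.ofAdd (1 : ZMod n))) (Multiplicative.ofAdd a)) t =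
        if (t : ℕ) = 0 then a ⟨n - 2, by have := t.isLt; omega⟩
        else a ⟨(t : ℕ) - 1, by have := t.isLt; omega⟩
          + a ⟨n - 2, by have := t.isLt; omega⟩) :
    Nonempty (↥(Subgroup.closure {Iy, Oy}) ≃*
      Multiplicative (Fin (n - 1) → ZMod 2) ⋊[φ] Multiplicative (ZMod n)) ∧
    Nat.card ↥(Subgroup.closure {Iy, Oy}) = 2 ^ (n - 1) * n := by
  have hcley : c ≤ y := Nat.le_of_dvd hy0 (hy_eq ▸ Dvd.intro u rfl)
  have hn2 : 2 ≤ n := by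
    rcases (show n = 0 ∨ n = 1 ∨ 2 ≤ n by omega) with h | h | h
    · rw [h, mul_zero] at hk_eq
      omega
    · rw [h, mul_one] at hk_eq
      omega
    · exact h
  haveI : NeZero k := ⟨by omega⟩
  haveI : NeZero n := ⟨by omega⟩
  haveI : Fact (1 < n) := ⟨hn2⟩
  have hnzero : ((n * y : ℕ) : ZMod k) = 0 := by
    rw [ZMod.natCast_eq_zero_iff]
    exact ⟨u, by rw [hy_eq, hk_eq]; ring⟩
  have hGiff : ∀ s t : ℕ, ((s * y : ℕ) : ZMod k) = ((t * y : ℕ) : ZMod k) ↔ s % n = t % n :=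
    Gcond k y n c u hgcd0 hy_eq hk_eq hco
  have hGmp : ∀ s t : ℕ, s % n = t % n → ((s * y : ℕ) : ZMod k) = ((t * y : ℕ) : ZMod k) :=
    fun s t h => (hGiff s t).mpr h
  have hnyuk : n * y = u * k := by rw [hy_eq, hk_eq]; ring
  have hsum : ∀ x : ZMod k, ∑ j ∈ Finset.range n, V k y j x = 0 := by
    intro x
    rw [sum_V k y n u hy0 hyk hnyuk x, ZMod.natCast_eq_zero_iff]
    exact heven.two_dvd
  -- the key rotation compatibility
  have KEYrot : ∀ (r : ℕ) (a : Fin (n - 1) → ZMod 2),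
      (fun x => Efun k y n (extf n a) (x - ((r * y : ℕ) : ZMod k)))
        = Efun k y n (extf n (Multiplicative.toAdd
            ((φ (Multiplicative.ofAdd ((r : ℕ) : ZMod n))) (Multiplicative.ofAdd a)))) := by
    intro r
    induction r with
    | zero =>
      intro a
      funext x
      rw [Nat.zero_mul, Nat.cast_zero, sub_zero, Nat.cast_zero, ofAdd_zero, map_one,
        MulAut.one_apply, toAdd_ofAdd]
    | succ r ih =>
      intro a
      funext x
      have hsplit : x - (((r + 1) * y : ℕ) : ZMod k)
          = (x - ((y : ℕ) : ZMod k)) - ((r * y : ℕ) : ZMod k) := by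
        push_cast
        ring
      rw [hsplit, congrFun (ih a) (x - ((y : ℕ) : ZMod k)),
        rot_E k y n hn2 hnzero hsum _ x]
      have hcast : (((r + 1 : ℕ)) : ZMod n) = (1 : ZMod n) + ((r : ℕ) : ZMod n) := by
        push_cast
        ring
      rw [hcast, ofAdd_add, map_mul, MulAut.mul_apply]
      set b := Multiplicative.toAdd
        ((φ (Multiplicative.ofAdd ((r : ℕ) : ZMod n))) (Multiplicative.ofAdd a)) with hb
      rw [show (φ (Multiplicative.ofAdd ((r : ℕ) : ZMod n))) (Multiplicative.ofAdd a)
        = Multiplicative.ofAdd b from (ofAdd_toAdd _).symm]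
      refine congrFun (Efun_congr k y n fun s hs => ?_) x
      have hrhs : extf n (Multiplicative.toAdd
          ((φ (Multiplicative.ofAdd (1 : ZMod n))) (Multiplicative.ofAdd b))) s
          = Multiplicative.toAdd
            ((φ (Multiplicative.ofAdd (1 : ZMod n))) (Multiplicative.ofAdd b)) ⟨s, hs⟩ := by
        unfold extf
        rw [dif_pos hs]
      rw [hrhs, hφ b ⟨s, hs⟩]
      unfold extf
      by_cases h0 : s = 0
      · rw [if_pos h0, if_pos h0, dif_pos (show n - 2 < n - 1 by omega)]
      · rw [if_neg h0, if_neg h0, dif_pos (show s - 1 < n - 1 by omega),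
          dif_pos (show n - 2 < n - 1 by omega)]
    -- compatibility for the lift
  have compat : ∀ g : Multiplicative (ZMod n),
      (fnD m k y n).comp ((φ g).toMonoidHom)
        = (MulAut.conj (fgD m k y n hGmp g)).toMonoidHom.comp (fnD m k y n) := by
    intro g
    apply MonoidHom.ext
    intro a
    show fnD m k y n ((φ g) a)
      = fgD m k y n hGmp g * fnD m k y n a * (fgD m k y n hGmp g)⁻¹
    rw [fnD_apply, fnD_apply, fgD_apply, P_conj]
    apply P_congr _ rfl
    have hKE := KEYrot (Multiplicative.toAdd g).val (Multiplicative.toAdd a)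
    rw [ofAdd_toAdd, show ((((Multiplicative.toAdd g).val : ℕ)) : ZMod n)
      = Multiplicative.toAdd g from ZMod.natCast_rightInverse _, ofAdd_toAdd] at hKE
    exact hKE.symm
  -- the homomorphism from the semidirect product
  set Φ := SemidirectProduct.lift (fnD m k y n) (fgD m k y n hGmp) compat with hΦ
  have hΦval : ∀ g, Φ g = fnD m k y n g.left * fgD m k y n hGmp g.right := fun g => rfl
  -- injectivity
  have hinj : Function.Injective Φ := by
    rw [injective_iff_map_eq_one]
    intro g hg
    rw [hΦval g, fnD_apply, fgD_apply, P_mul00, add_zero] at hg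
    obtain ⟨he, hs⟩ := P_eq_one hm hk hg
    have hright : g.right = 1 := by
      have h0 : (((Multiplicative.toAdd g.right).val * y : ℕ) : ZMod k)
          = ((0 * y : ℕ) : ZMod k) := by
        rw [hs, Nat.zero_mul, Nat.cast_zero]
      have h1 := (hGiff _ _).mp h0
      rw [Nat.zero_mod, Nat.mod_eq_of_lt (ZMod.val_lt _)] at h1
      have h2 : Multiplicative.toAdd g.right = 0 := by
        rwa [← ZMod.val_eq_zero]
      rw [← ofAdd_toAdd g.right, h2, ofAdd_zero]
    have hleft : g.left = 1 := by
      have hA : ∀ x : ZMod k, ∑ t ∈ Finset.range (n - 1),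
          extf n (Multiplicative.toAdd g.left) t * V k y (t + 1) x = 0 := by
        intro x
        rw [← Efun_apply, he, Pi.zero_apply]
      have h3 := indep k y n hk hy0 hyk hn2 hGiff _ hA
      have h4 : Multiplicative.toAdd g.left = 0 := by
        funext s
        have h5 := h3 s.val s.isLt
        unfold extf at h5
        rw [dif_pos s.isLt] at h5
        simpa using h5
      rw [← ofAdd_toAdd g.left, h4, ofAdd_zero]
    rw [← SemidirectProduct.inl_left_mul_inr_right g, hleft, hright, map_one, map_one, one_mul]
  -- closure membership lemmas
  set CL := Subgroup.closure {P m k (chi k y) ((y : ℕ) : ZMod k), P m k 0 ((y : ℕ) : ZMod k)}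
    with hCL
  have hmemχ : P m k (chi k y) ((y : ℕ) : ZMod k) ∈ CL :=
    Subgroup.subset_closure (by simp)
  have hmem0 : P m k 0 ((y : ℕ) : ZMod k) ∈ CL :=
    Subgroup.subset_closure (by simp)
  have hVmem : ∀ j : ℕ, P m k (V k y j) 0 ∈ CL := by
    intro j
    induction j with
    | zero =>
      rw [V_zero]
      have h1 : P m k (chi k y) ((y : ℕ) : ZMod k) * (P m k 0 ((y : ℕ) : ZMod k))⁻¹
          = P m k (chi k y) 0 := by
        rw [P_inv0, P_mul]
        apply P_congr
        · funext j
          simp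
        · simp
      rw [← h1]
      exact Subgroup.mul_mem _ hmemχ (Subgroup.inv_mem _ hmem0)
    | succ j ih =>
      have h1 : P m k 0 ((y : ℕ) : ZMod k) * P m k (V k y j) 0
          * (P m k 0 ((y : ℕ) : ZMod k))⁻¹ = P m k (V k y (j + 1)) 0 := by
        rw [P_conj]
        apply P_congr _ rfl
        funext x
        exact V_rot k y j x
      rw [← h1]
      exact Subgroup.mul_mem _ (Subgroup.mul_mem _ hmem0 ih) (Subgroup.inv_mem _ hmem0)
  have hsum_mem : ∀ (M : ℕ) (A : ℕ → ZMod 2),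
      P m k (∑ t ∈ Finset.range M, A t • V k y (t + 1)) 0 ∈ CL := by
    intro M
    induction M with
    | zero =>
      intro A
      rw [Finset.range_zero, Finset.sum_empty, P_one]
      exact Subgroup.one_mem _
    | succ M ih =>
      intro A
      rw [Finset.sum_range_succ, ← P_mul00]
      apply Subgroup.mul_mem _ (ih A)
      rcases zmod2_cases (A M) with h | h
      · rw [h, zero_smul, P_one]
        exact Subgroup.one_mem _
      · rw [h, one_smul]
        exact hVmem (M + 1)
  -- range identification
  have hrange : Φ.range = CL := by
    apply le_antisymm
    · rintro x ⟨g, rfl⟩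
      rw [← SemidirectProduct.inl_left_mul_inr_right g, map_mul]
      apply Subgroup.mul_mem
      · rw [SemidirectProduct.lift_inl, fnD_apply]
        exact hsum_mem (n - 1) _
      · rw [SemidirectProduct.lift_inr, fgD_apply,
          ← P_pow m k y (Multiplicative.toAdd g.right).val]
        exact Subgroup.pow_mem _ hmem0 _
    · rw [hCL, Subgroup.closure_le]
      intro x hx
      rcases hx with rfl | rfl
      · refine ⟨SemidirectProduct.inl (Multiplicative.ofAdd (fun _ => 1))
          * SemidirectProduct.inr (Multiplicative.ofAdd 1), ?_⟩
        rw [map_mul, SemidirectProduct.lift_inl, SemidirectProduct.lift_inr,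
          fnD_apply, fgD_apply, P_mul00, add_zero, toAdd_ofAdd, toAdd_ofAdd, ZMod.val_one,
          one_mul]
        apply P_congr _ rfl
        funext x
        rw [Efun_apply]
        have h := hsum x
        rw [show n = (n - 1) + 1 from by omega, Finset.sum_range_succ'] at h
        have hv0 : V k y 0 x = chi k y x := congrFun (V_zero k y) x
        have hones : ∀ t ∈ Finset.range (n - 1),
            extf n (fun _ => (1 : ZMod 2)) t * V k y (t + 1) x = V k y (t + 1) x := by
          intro t ht
          unfold extf
          rw [dif_pos (Finset.mem_range.mp ht), one_mul]
        rw [Finset.sum_congr rfl hones]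
        have h2 : ∑ t ∈ Finset.range (n - 1), V k y (t + 1) x = -(V k y 0 x) := by
          linear_combination h
        rw [h2, show ∀ z : ZMod 2, -z = z from by decide, hv0]
      · exact ⟨SemidirectProduct.inr (Multiplicative.ofAdd 1), by
          rw [SemidirectProduct.lift_inr, fgD_apply, toAdd_ofAdd, ZMod.val_one, one_mul]⟩
  -- transport through the digit equivalence
  have hconj : Subgroup.map (permConj (digitEquiv m k)).toMonoidHom
      (Subgroup.closure {Iy, Oy}) = CL := by
    rw [MonoidHom.map_closure]
    have himg : (permConj (digitEquiv m k)).toMonoidHom '' {Iy, Oy}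
        = {P m k (chi k y) ((y : ℕ) : ZMod k), P m k 0 ((y : ℕ) : ZMod k)} := by
      rw [Set.image_pair]
      rw [show (permConj (digitEquiv m k)).toMonoidHom Iy
        = P m k (chi k y) ((y : ℕ) : ZMod k) from I_digits m k y hm hy0 hyk Iy hIy]
      rw [show (permConj (digitEquiv m k)).toMonoidHom Oy
        = P m k 0 ((y : ℕ) : ZMod k) from O_digits m k y hm hyk Oy hOy]
    rw [himg]
  have iso : ↥(Subgroup.closure {Iy, Oy}) ≃*
      Multiplicative (Fin (n - 1) → ZMod 2) ⋊[φ] Multiplicative (ZMod n) :=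
    ((permConj (digitEquiv m k)).subgroupMap (Subgroup.closure {Iy, Oy})).trans
      ((MulEquiv.subgroupCongr (hconj.trans hrange.symm)).trans
        (MonoidHom.ofInjective hinj).symm)
  constructor
  · exact ⟨iso⟩
  · rw [Nat.card_congr iso.toEquiv]
    have e2 : (Multiplicative (Fin (n - 1) → ZMod 2) ⋊[φ] Multiplicative (ZMod n))
        ≃ (Multiplicative (Fin (n - 1) → ZMod 2)) × (Multiplicative (ZMod n)) :=
      ⟨fun g => (g.left, g.right), fun p => ⟨p.1, p.2⟩, fun g => by cases g; rfl, fun p => rfl⟩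
    rw [Nat.card_congr e2, Nat.card_prod]
    have c1 : Nat.card (Multiplicative (Fin (n - 1) → ZMod 2)) = 2 ^ (n - 1) := by
      rw [Nat.card_congr Multiplicative.toAdd, Nat.card_fun, Nat.card_zmod,
        Nat.card_eq_fintype_card, Fintype.card_fin]
    have c2 : Nat.card (Multiplicative (ZMod n)) = n := by
      rw [Nat.card_congr Multiplicative.toAdd, Nat.card_zmod]
    rw [c1, c2]

/-- (Theorem 1.2(2) of the paper.) Let `m, k > 1`, let `y` be a positive
integer with `y < k`, and set `c = gcd(y, k)`.  If `y/c` is even, then on a deck of `m^k`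
cards the group `⟨I_{m^y}, O_{m^y}⟩` generated by the in and out `m^y`-shuffles (cut into
`m^y` stacks of `m^(k−y)` cards) is isomorphic to `(ℤ/2ℤ)^((k/c)−1) ⋊_φ ℤ/(k/c)ℤ`, where
the generator `1` of `ℤ/(k/c)ℤ` acts on `(ℤ/2ℤ)^((k/c)−1)` by
`φ(1)·(a_1, …, a_{(k/c)−1}) = (a_{(k/c)−1}, a_1 + a_{(k/c)−1}, …, a_{(k/c)−2} + a_{(k/c)−1})`;
in particular this group has order `2^((k/c)−1)·(k/c)`, independent of `m`. -/
theorem shuffle_group_even_case (m k y : ℕ) (hm : 1 < m) (hk : 1 < k)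
    (hy0 : 0 < y) (hyk : y < k) (c : ℕ) (hc : c = Nat.gcd y k) (heven : Even (y / c))
    (Oy Iy : Equiv.Perm (Fin (m ^ k)))
    (hOy : ∀ i : Fin (m ^ k),
      (Oy i : ℕ) = m ^ y * ((i : ℕ) % m ^ (k - y)) + (i : ℕ) / m ^ (k - y))
    (hIy : ∀ i : Fin (m ^ k),
      (Iy i : ℕ) = m ^ y * ((i : ℕ) % m ^ (k - y)) + (m ^ y - 1 - (i : ℕ) / m ^ (k - y)))
    (φ : Multiplicative (ZMod (k / c)) →*
      MulAut (Multiplicative (Fin (k / c - 1) → ZMod 2)))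
    (hφ : ∀ (a : Fin (k / c - 1) → ZMod 2) (t : Fin (k / c - 1)),
      Multiplicative.toAdd
          ((φ (Multiplicative.ofAdd (1 : ZMod (k / c)))) (Multiplicative.ofAdd a)) t =
        if (t : ℕ) = 0 then a ⟨k / c - 2, by have := t.isLt; omega⟩
        else a ⟨(t : ℕ) - 1, by have := t.isLt; omega⟩
          + a ⟨k / c - 2, by have := t.isLt; omega⟩) :
    Nonempty (↥(Subgroup.closure {Iy, Oy}) ≃*
      Multiplicative (Fin (k / c - 1) → ZMod 2) ⋊[φ] Multiplicative (ZMod (k / c))) ∧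
    Nat.card ↥(Subgroup.closure {Iy, Oy}) = 2 ^ (k / c - 1) * (k / c) := by
  have hgcd0 : 0 < c := by
    rw [hc]
    exact Nat.gcd_pos_of_pos_left _ hy0
  have hcy : c ∣ y := hc ▸ Nat.gcd_dvd_left y k
  have hck : c ∣ k := hc ▸ Nat.gcd_dvd_right y k
  exact shuffle_aux m k y c (k / c) (y / c) hm hk hy0 hyk hgcd0
    (Nat.mul_div_cancel' hck).symm (Nat.mul_div_cancel' hcy).symm
    (by rw [hc]; exact Nat.coprime_div_gcd_div_gcd (hc ▸ hgcd0)) heven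
    Oy Iy hOy hIy φ hφ
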